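/- For every nonnegative integer r, the quiver Γ^{r+5}_{r,1,1} of coloured oriented single and paired diagonals of a regular (r+5)-gon is isomorphic as a stable translation quiver to Z D_{r+3}/⟨τ^{-(r+5)} ρ^{r+5}⟩, where ρ is the automorphism of Z D_{r+3} induced by the order-two diagram automorphism of D_{r+3}; this quotient is the Auslander–Reiten quiver of the orbit category D^b(mod kD_{r+3})/τ^{-3}Σ. -/

import Mathlib

/-!
Coloured oriented single and paired diagonals in a regular polygon, following
L. Lamberti, "Combinatorial model for the cluster categories of type E".

The vertices of the regular `m`-gon `Π` are labelled by `ZMod m` (clockwise).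
A coloured oriented diagonal `[i,j]_c` is encoded by the structure `Diag`;
the colour `P` encodes a *paired* diagonal `[i,j]_P = {[i,j]_R, [j,i]_B}`.
-/

inductive Colour : Type
  | R : Colour
  | B : Colour
  | P : Colour
deriving DecidableEq

/-- A coloured oriented (single or paired) diagonal `[i,j]_c` of the regular
`m`-gon (for `m = 0` we interpret `ZMod 0 = ℤ` as the infinite-sided polygon). -/
structure Diag (m : ℕ) where
  i : ZMod m
  j : ZMod m
  c : Colour
deriving DecidableEq

/-- The simultaneous change of colour and orientation:
`ρ([i,j]_R) = [j,i]_B`, `ρ([i,j]_B) = [j,i]_R`, `ρ([i,j]_P) = [i,j]_P`. -/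
def rho {m : ℕ} : Diag m → Diag m
  | ⟨i, j, Colour.R⟩ => ⟨j, i, Colour.B⟩
  | ⟨i, j, Colour.B⟩ => ⟨j, i, Colour.R⟩
  | ⟨i, j, Colour.P⟩ => ⟨i, j, Colour.P⟩

/-- The anticlockwise rotation `[i,j]_c ↦ [i-1,j-1]_c`. -/
def shiftD {m : ℕ} (d : Diag m) : Diag m := ⟨d.i - 1, d.j - 1, d.c⟩

/-- The slice of `Π_{r,s,t}` based at the vertex `i` of `Π`:
the paired diagonals `[i,i+2]_P, …, [i,i+r+2]_P`, the red single diagonals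
`[i,i+r+3]_R, …, [i,i+r+s+2]_R` and the blue single diagonals
`[i+r+3,i]_B, …, [i+r+t+2,i]_B`. -/
def PiSetAt (r s t : ℕ) {m : ℕ} (i : ZMod m) : Set (Diag m) :=
  {d | (∃ k : ℕ, 2 ≤ k ∧ k ≤ r + 2 ∧ d = ⟨i, i + (k : ZMod m), Colour.P⟩) ∨
       (∃ k : ℕ, r + 3 ≤ k ∧ k ≤ r + s + 2 ∧ d = ⟨i, i + (k : ZMod m), Colour.R⟩) ∨
       (∃ k : ℕ, r + 3 ≤ k ∧ k ≤ r + t + 2 ∧ d = ⟨i + (k : ZMod m), i, Colour.B⟩)}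

/-- The set `Π_{r,s,t}` of coloured oriented single and paired diagonals of the
regular `m`-gon associated to the tree `T_{r,s,t}`. -/
def PiSet (r s t m : ℕ) : Set (Diag m) := ⋃ i : ZMod m, PiSetAt r s t i

open Classical in
/-- The translation `τ` on coloured oriented diagonals: the anticlockwise
rotation `[i,j]_c ↦ [i-1,j-1]_c`, composed with `ρ^{m}` on the first slice
`Π_{r,s,t}|_1` when the tree is symmetric (`s = t`). -/
noncomputable def tauD (r s t : ℕ) {m : ℕ} (d : Diag m) : Diag m :=
  if s = t ∧ d ∈ PiSetAt r s t (1 : ZMod m) then rho^[m] (shiftD d) else shiftD d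

/-- Minimal clockwise rotations (before the colour adjustment at the seam):
`[k,l]_c → [k,l+1]_c`, `[k,l]_c → [k+1,l]_c`, together with
`[k,k+r+2]_P → [k,k+r+3]_R`, `[k,k+r+2]_P → [k+r+3,k]_B`,
`[k,k+r+3]_R → [k+1,k+r+3]_P` and `[k+r+3,k]_B → [k+1,k+r+3]_P`. -/
def Rot (r : ℕ) {m : ℕ} (a b : Diag m) : Prop :=
  b = ⟨a.i, a.j + 1, a.c⟩ ∨ b = ⟨a.i + 1, a.j, a.c⟩ ∨
  (∃ k : ZMod m, a = ⟨k, k + ((r : ZMod m) + 2), Colour.P⟩ ∧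
    (b = ⟨k, k + ((r : ZMod m) + 3), Colour.R⟩ ∨
     b = ⟨k + ((r : ZMod m) + 3), k, Colour.B⟩)) ∨
  (∃ k : ZMod m,
    (a = ⟨k, k + ((r : ZMod m) + 3), Colour.R⟩ ∨
     a = ⟨k + ((r : ZMod m) + 3), k, Colour.B⟩) ∧
    b = ⟨k + 1, k + ((r : ZMod m) + 3), Colour.P⟩)

/-- In the symmetric case `s = t` with an odd-sided polygon, the arrows whose
source lies in `τ(Π_{r,t,t}|_1)` and whose (unadjusted) target lies in the
first slice `Π_{r,t,t}|_1` additionally change colour and orientation. -/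
def SeamTwist (r s t m : ℕ) (a b₀ : Diag m) : Prop :=
  s = t ∧ Odd m ∧ a ∈ (tauD r s t) '' (PiSetAt r s t (1 : ZMod m)) ∧
    b₀ ∈ PiSetAt r s t (1 : ZMod m)

/-- The arrows of the quiver `Γ^{m}_{r,s,t}`: minimal clockwise rotations
between elements of `Π_{r,s,t}`, adjusted by `ρ` at the seam. -/
def ArrowD (r s t m : ℕ) (a b : Diag m) : Prop :=
  a ∈ PiSet r s t m ∧ b ∈ PiSet r s t m ∧
    ∃ b₀, Rot r a b₀ ∧
      ((SeamTwist r s t m a b₀ ∧ b = rho b₀) ∨ (¬ SeamTwist r s t m a b₀ ∧ b = b₀))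

/-- The vertices of the tree `T_{r,s,t}`: a central vertex together with three
legs having `r`, `s`, `t` vertices respectively. -/
inductive TVert (r s t : ℕ) : Type
  | center : TVert r s t
  | legA : Fin r → TVert r s t
  | legB : Fin s → TVert r s t
  | legC : Fin t → TVert r s t
deriving DecidableEq

/-- An orientation of the tree `T_{r,s,t}`: the `A`-leg points towards the
centre, the `B`- and `C`-legs point away from it. -/
def TArrow {r s t : ℕ} (x y : TVert r s t) : Prop :=
  (∃ k l : Fin r, (l : ℕ) + 1 = (k : ℕ) ∧ x = TVert.legA k ∧ y = TVert.legA l) ∨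
  (∃ k : Fin r, (k : ℕ) = 0 ∧ x = TVert.legA k ∧ y = TVert.center) ∨
  (∃ k : Fin s, (k : ℕ) = 0 ∧ x = TVert.center ∧ y = TVert.legB k) ∨
  (∃ k l : Fin s, (k : ℕ) + 1 = (l : ℕ) ∧ x = TVert.legB k ∧ y = TVert.legB l) ∨
  (∃ k : Fin t, (k : ℕ) = 0 ∧ x = TVert.center ∧ y = TVert.legC k) ∨
  (∃ k l : Fin t, (k : ℕ) + 1 = (l : ℕ) ∧ x = TVert.legC k ∧ y = TVert.legC l)

/-- The order-two graph automorphism of a symmetric tree `T_{r,t,t}`,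
exchanging its two legs of length `t`. -/
def treeRho {r t : ℕ} : TVert r t t → TVert r t t
  | TVert.center => TVert.center
  | TVert.legA k => TVert.legA k
  | TVert.legB k => TVert.legC k
  | TVert.legC k => TVert.legB k

/-- `treeRho` as a permutation. -/
def treeRhoPerm (r t : ℕ) : Equiv.Perm (TVert r t t) :=
  Function.Involutive.toPerm treeRho (by intro x; cases x <;> rfl)

/-- The translation of the repetitive quiver `ℤQ`: `τ(m,i) = (m-1,i)`. -/
def ZTau {V : Type} (x : ℤ × V) : ℤ × V := (x.1 - 1, x.2)

/-- The arrows of the repetitive quiver `ℤQ` of a quiver with arrow relation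
`A`: for each arrow `i → j` of `Q` there are arrows `(m,i) → (m,j)` and
`(m,j) → (m+1,i)`. -/
def ZArrow {V : Type} (A : V → V → Prop) (x y : ℤ × V) : Prop :=
  (y.1 = x.1 ∧ A x.2 y.2) ∨ (y.1 = x.1 + 1 ∧ A y.2 x.2)

/-- The automorphism `τ^{-m} σ` of `ℤQ` given by shifting `m` steps to the
right and applying the graph automorphism `σ` of `Q`. -/
def shiftPerm {V : Type} (m : ℕ) (σ : Equiv.Perm V) : Equiv.Perm (ℤ × V) :=
  (Equiv.addRight (m : ℤ)).prodCongr σ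

/-- `φ` exhibits the quiver `Γ^{m}_{r,s,t}` (with vertex set `PiSet r s t m`,
arrow relation `ArrowD` and translation `tauD`) as the quotient of the
repetitive quiver `ℤQ` (with arrow relation `ZArrow A` and translation `ZTau`)
by the cyclic group generated by the automorphism `g`, as stable translation
quivers: `φ` is surjective onto the vertex set, its fibres are exactly the
`g`-orbits, it commutes with the translations, and the arrows of
`Γ^{m}_{r,s,t}` correspond exactly to the `g`-orbits of arrows of `ℤQ`. -/
def IsQuotientIso (r s t m : ℕ) {V : Type} (A : V → V → Prop)
    (g : Equiv.Perm (ℤ × V)) (φ : ℤ × V → Diag m) : Prop :=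
  (∀ x, φ x ∈ PiSet r s t m) ∧
  (∀ d ∈ PiSet r s t m, ∃ x, φ x = d) ∧
  (∀ x y, φ x = φ y ↔ ∃ k : ℤ, (g ^ k) x = y) ∧
  (∀ x, φ (ZTau x) = tauD r s t (φ x)) ∧
  (∀ x y, ArrowD r s t m (φ x) (φ y) ↔
    ∃ y', (∃ k : ℤ, (g ^ k) y = y') ∧ ZArrow A x y')
section Aux
variable {r : ℕ}

/-- The basic slice parametrisation of `Π_{r,1,1}` by the tree `D_{r+3}`. -/
def baseD (r : ℕ) (i : ZMod (r+5)) : TVert r 1 1 → Diag (r+5)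
  | .legA k => ⟨i, i + ((r + 1 - (k : ℕ) : ℕ) : ZMod (r+5)), .P⟩
  | .center => ⟨i, i + ((r + 2 : ℕ) : ZMod (r+5)), .P⟩
  | .legB _ => ⟨i, i + ((r + 3 : ℕ) : ZMod (r+5)), .R⟩
  | .legC _ => ⟨i + ((r + 3 : ℕ) : ZMod (r+5)), i, .B⟩

lemma ci {a b : ℕ} (ha : a < r+5) (hb : b < r+5) :
    (a : ZMod (r+5)) = (b : ZMod (r+5)) ↔ a = b := by
  rw [ZMod.natCast_eq_natCast_iff]
  constructor
  · intro h
    have := Nat.ModEq.eq_of_lt_of_lt h ha hb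
    exact this
  · intro h; rw [h]

lemma cancelz {x : ZMod (r+5)} {a b : ℕ} (ha : a < r+5) (hb : b < r+5) :
    x + (a : ZMod (r+5)) = x + (b : ZMod (r+5)) ↔ a = b := by
  rw [add_right_inj, ci ha hb]

lemma zmodOneNeZero : (1 : ZMod (r+5)) ≠ 0 := by
  have := (ci (show 1 < r+5 by omega) (show 0 < r+5 by omega))
  simpa using this.not.mpr (by omega)
end Aux
section AuxB
variable {r : ℕ}

lemma baseD_inj {i j : ZMod (r+5)} {v w : TVert r 1 1}
    (h : baseD r i v = baseD r j w) : i = j ∧ v = w := by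
  cases v <;> cases w <;> simp only [baseD, Diag.mk.injEq] at h
  · exact ⟨h.1, rfl⟩
  · -- center / legA
    obtain ⟨h1, h2, -⟩ := h
    subst h1
    rw [cancelz (by omega) (by omega)] at h2
    next k => exact absurd h2 (by have := k.is_lt; omega)
  · simp at h
  · simp at h
  · -- legA / center
    next k =>
    obtain ⟨h1, h2, -⟩ := h
    subst h1
    rw [cancelz (by omega) (by omega)] at h2
    exact absurd h2 (by have := k.is_lt; omega)
  · -- legA / legA
    next k l =>
    obtain ⟨h1, h2, -⟩ := h
    subst h1
    rw [cancelz (by omega) (by omega)] at h2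
    refine ⟨rfl, ?_⟩
    have hk := k.is_lt; have hl := l.is_lt
    congr 1
    exact Fin.ext (by omega)
  · simp at h
  · simp at h
  · simp at h
  · simp at h
  · -- legB / legB
    next k l =>
    exact ⟨h.1, by congr 1; exact Subsingleton.elim k l⟩
  · simp at h
  · simp at h
  · simp at h
  · simp at h
  · -- legC / legC
    next k l =>
    exact ⟨h.2.1, by congr 1; exact Subsingleton.elim k l⟩

lemma mem_sliceAt_iff {d : Diag (r+5)} {i : ZMod (r+5)} :
    d ∈ PiSetAt r 1 1 i ↔ ∃ v : TVert r 1 1, d = baseD r i v := by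
  constructor
  · rintro (⟨k, hk2, hkr, rfl⟩ | ⟨k, hk2, hkr, rfl⟩ | ⟨k, hk2, hkr, rfl⟩)
    · rcases eq_or_lt_of_le hkr with h | h
      · exact ⟨.center, by simp [baseD, h]⟩
      · refine ⟨.legA ⟨r + 1 - k, by omega⟩, ?_⟩
        simp only [baseD]
        congr 2
        congr 1
        omega
    · have : k = r + 3 := by omega
      exact ⟨.legB 0, by simp [baseD, this]⟩
    · have : k = r + 3 := by omega
      exact ⟨.legC 0, by simp [baseD, this]⟩
  · rintro ⟨v, rfl⟩
    cases v with
    | legA k => exact Or.inl ⟨r + 1 - k, by omega, by omega, rfl⟩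
    | center => exact Or.inl ⟨r + 2, by omega, by omega, rfl⟩
    | legB k => exact Or.inr (Or.inl ⟨r + 3, by omega, by omega, rfl⟩)
    | legC k => exact Or.inr (Or.inr ⟨r + 3, by omega, by omega, rfl⟩)

lemma baseD_mem_PiSet (i : ZMod (r+5)) (v : TVert r 1 1) :
    baseD r i v ∈ PiSet r 1 1 (r+5) :=
  Set.mem_iUnion.2 ⟨i, mem_sliceAt_iff.2 ⟨v, rfl⟩⟩

end AuxB
section AuxC
variable {r : ℕ}

lemma tarrow_src {v w : TVert r 1 1} (h : TArrow v w) : treeRho v = v := by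
  rcases h with ⟨k, l, -, rfl, -⟩ | ⟨k, -, rfl, -⟩ | ⟨k, -, rfl, -⟩ |
    ⟨k, l, hkl, rfl, -⟩ | ⟨k, -, rfl, -⟩ | ⟨k, l, hkl, rfl, -⟩
  · rfl
  · rfl
  · rfl
  · exact absurd hkl (by have := l.is_lt; omega)
  · rfl
  · exact absurd hkl (by have := l.is_lt; omega)

lemma tarrow_to_legB {v : TVert r 1 1} {k : Fin 1} :
    TArrow v (TVert.legB k) ↔ v = TVert.center := by
  constructor
  · rintro (⟨a, b, -, -, h⟩ | ⟨a, -, -, h⟩ | ⟨a, -, rfl, h⟩ |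
      ⟨a, b, hab, -, h⟩ | ⟨a, -, -, h⟩ | ⟨a, b, -, -, h⟩) <;> first
      | rfl
      | exact absurd hab (by have := b.is_lt; omega)
      | simp at h
  · rintro rfl
    exact Or.inr (Or.inr (Or.inl ⟨k, by omega, rfl, rfl⟩))

lemma tarrow_to_legC {v : TVert r 1 1} {k : Fin 1} :
    TArrow v (TVert.legC k) ↔ v = TVert.center := by
  constructor
  · rintro (⟨a, b, -, -, h⟩ | ⟨a, -, -, h⟩ | ⟨a, -, -, h⟩ |
      ⟨a, b, hab, -, h⟩ | ⟨a, -, rfl, h⟩ | ⟨a, b, hab, -, h⟩) <;> first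
      | rfl
      | exact absurd hab (by have := b.is_lt; omega)
      | simp at h
  · rintro rfl
    exact Or.inr (Or.inr (Or.inr (Or.inr (Or.inl ⟨k, by omega, rfl, rfl⟩))))

lemma tarrow_rho_right {v w : TVert r 1 1} :
    TArrow v (treeRho w) ↔ TArrow v w := by
  cases w with
  | center => exact Iff.rfl
  | legA k => exact Iff.rfl
  | legB k => rw [show treeRho (TVert.legB k) = TVert.legC k from rfl,
      tarrow_to_legB, tarrow_to_legC]
  | legC k => rw [show treeRho (TVert.legC k) = TVert.legB k from rfl,
      tarrow_to_legB, tarrow_to_legC]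

lemma tarrow_rho_left {v w : TVert r 1 1} :
    TArrow (treeRho v) w ↔ TArrow v w := by
  constructor
  · intro h
    have h2 := tarrow_src h
    have h3 : treeRho (treeRho v) = v := by cases v <;> rfl
    rwa [← h3, h2]
  · intro h
    rwa [tarrow_src h]

lemma treeRhoPerm_apply (v : TVert r 1 1) : treeRhoPerm r 1 v = treeRho v := rfl

lemma treeRhoPerm_sq : (treeRhoPerm r 1) ^ 2 = 1 := by
  ext v
  simp only [pow_two, Equiv.Perm.mul_apply, treeRhoPerm_apply, Equiv.Perm.one_apply]
  cases v <;> rfl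

lemma rpow_apply (j : ℤ) (v : TVert r 1 1) :
    ((treeRhoPerm r 1) ^ j) v = if Even j then v else treeRho v := by
  rcases Int.even_or_odd j with ⟨c, hc⟩ | ⟨c, hc⟩
  · have : ((treeRhoPerm r 1) ^ j) = 1 := by
      rw [hc, show c + c = 2 * c by ring, zpow_mul]
      norm_cast
      rw [treeRhoPerm_sq, one_zpow]
    rw [this, if_pos ⟨c, hc⟩]
    rfl
  · have : ((treeRhoPerm r 1) ^ j) = treeRhoPerm r 1 := by
      rw [hc, zpow_add, zpow_mul]
      norm_cast
      rw [treeRhoPerm_sq, one_zpow, one_mul, pow_one]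
    rw [this, if_neg (by simp [hc, parity_simps])]
    rfl

lemma rpow_parity {a b : ℤ} (h : (2:ℤ) ∣ a - b) :
    ((treeRhoPerm r 1) ^ a) = ((treeRhoPerm r 1) ^ b) := by
  ext v
  rw [rpow_apply, rpow_apply]
  have : Even a ↔ Even b := by
    obtain ⟨c, hc⟩ := h
    have : a = b + 2*c := by omega
    subst this
    simp [parity_simps]
  simp only [this]

lemma tarrow_zpow {a b : ℤ} {v w : TVert r 1 1} :
    TArrow (((treeRhoPerm r 1) ^ a) v) (((treeRhoPerm r 1) ^ b) w) ↔ TArrow v w := by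
  rw [rpow_apply, rpow_apply]
  split_ifs <;> simp only [tarrow_rho_left, tarrow_rho_right]

end AuxC
section AuxD
variable {r : ℕ}

lemma succ_cast (x : ZMod (r+5)) (a : ℕ) :
    x + (a : ZMod (r+5)) + 1 = x + ((a+1 : ℕ) : ZMod (r+5)) := by push_cast; ring

lemma shuffle (x : ZMod (r+5)) (a : ℕ) :
    x + 1 + (a : ZMod (r+5)) = x + ((a+1 : ℕ) : ZMod (r+5)) := by push_cast; ring

lemma rot_base_iff (i i' : ZMod (r+5)) (v w : TVert r 1 1) :
    Rot r (baseD r i v) (baseD r i' w) ↔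
      (i' = i ∧ TArrow v w) ∨ (i' = i + 1 ∧ TArrow w v) := by
  have c2 : ((r : ZMod (r+5)) + 2) = ((r+2 : ℕ) : ZMod (r+5)) := by push_cast; ring
  have c3 : ((r : ZMod (r+5)) + 3) = ((r+3 : ℕ) : ZMod (r+5)) := by push_cast; ring
  constructor
  · intro h
    rcases h with h | h | ⟨κ, h1, h2 | h2⟩ | ⟨κ, h1 | h1, h2⟩
    · -- b = ⟨a.i, a.j + 1, a.c⟩
      cases v <;> cases w <;>
        simp only [baseD, Diag.mk.injEq, reduceCtorEq, and_false, false_and,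
          and_true] at h
      · -- center, center
        obtain ⟨rfl, h2⟩ := h
        rw [succ_cast, cancelz (by omega) (by omega)] at h2
        omega
      · -- center, legA
        obtain ⟨rfl, h2⟩ := h
        rw [succ_cast, cancelz (by omega) (by omega)] at h2
        omega
      · -- legA k, center
        next k =>
        obtain ⟨rfl, h2⟩ := h
        rw [succ_cast, cancelz (by omega) (by omega)] at h2
        refine Or.inl ⟨rfl, Or.inr (Or.inl ⟨k, by have := k.is_lt; omega, rfl, rfl⟩)⟩
      · -- legA k, legA l
        next k l =>
        obtain ⟨rfl, h2⟩ := h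
        rw [succ_cast, cancelz (by omega) (by omega)] at h2
        refine Or.inl ⟨rfl, Or.inl ⟨k, l, by have := k.is_lt; have := l.is_lt; omega, rfl, rfl⟩⟩
      · -- legB, legB
        obtain ⟨rfl, h2⟩ := h
        rw [succ_cast, cancelz (by omega) (by omega)] at h2
        omega
      · -- legC, legC
        obtain ⟨h1, h2⟩ := h
        rw [add_right_cancel_iff] at h1
        rw [h1, left_eq_add] at h2
        exact absurd h2 zmodOneNeZero
    · -- b = ⟨a.i + 1, a.j, a.c⟩
      cases v <;> cases w <;>
        simp only [baseD, Diag.mk.injEq, reduceCtorEq, and_false, false_and,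
          and_true] at h
      · -- center, center
        obtain ⟨rfl, h2⟩ := h
        rw [shuffle, cancelz (by omega) (by omega)] at h2
        omega
      · -- center, legA l
        next l =>
        obtain ⟨rfl, h2⟩ := h
        rw [shuffle, cancelz (by omega) (by omega)] at h2
        refine Or.inr ⟨rfl, Or.inr (Or.inl ⟨l, by have := l.is_lt; omega, rfl, rfl⟩)⟩
      · -- legA k, center
        obtain ⟨rfl, h2⟩ := h
        rw [shuffle, cancelz (by omega) (by omega)] at h2
        omega
      · -- legA k, legA l
        next k l =>
        obtain ⟨rfl, h2⟩ := h
        rw [shuffle, cancelz (by omega) (by omega)] at h2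
        refine Or.inr ⟨rfl, Or.inl ⟨l, k, by have := k.is_lt; have := l.is_lt; omega, rfl, rfl⟩⟩
      · -- legB, legB
        obtain ⟨rfl, h2⟩ := h
        rw [shuffle, cancelz (by omega) (by omega)] at h2
        omega
      · -- legC, legC
        obtain ⟨h1, h2⟩ := h
        rw [h2, add_right_comm, add_right_cancel_iff, left_eq_add] at h1
        exact absurd h1 zmodOneNeZero
    · -- a = ⟨κ, κ+(r+2), P⟩, b = ⟨κ, κ+(r+3), R⟩
      rw [c2] at h1; rw [c3] at h2
      cases v <;>
        simp only [baseD, Diag.mk.injEq, reduceCtorEq, and_false, false_and,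
          and_true] at h1
      · -- v = center
        obtain ⟨rfl, -⟩ := h1
        cases w <;>
          simp only [baseD, Diag.mk.injEq, reduceCtorEq, and_false, false_and,
            and_true] at h2
        next l =>
        obtain ⟨rfl, -⟩ := h2
        exact Or.inl ⟨rfl, Or.inr (Or.inr (Or.inl ⟨l, by have := l.is_lt; omega, rfl, rfl⟩))⟩
      · -- v = legA k
        obtain ⟨rfl, h1⟩ := h1
        rw [cancelz (by omega) (by omega)] at h1
        next k => exact absurd h1 (by have := k.is_lt; omega)
    · -- a = ⟨κ, κ+(r+2), P⟩, b = ⟨κ+(r+3), κ, B⟩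
      rw [c2] at h1; rw [c3] at h2
      cases v <;>
        simp only [baseD, Diag.mk.injEq, reduceCtorEq, and_false, false_and,
          and_true] at h1
      · -- v = center
        obtain ⟨rfl, -⟩ := h1
        cases w <;>
          simp only [baseD, Diag.mk.injEq, reduceCtorEq, and_false, false_and,
            and_true] at h2
        next l =>
        obtain ⟨-, rfl⟩ := h2
        exact Or.inl ⟨rfl, Or.inr (Or.inr (Or.inr (Or.inr (Or.inl
          ⟨l, by have := l.is_lt; omega, rfl, rfl⟩))))⟩
      · -- v = legA k
        obtain ⟨rfl, h1⟩ := h1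
        rw [cancelz (by omega) (by omega)] at h1
        next k => exact absurd h1 (by have := k.is_lt; omega)
    · -- a = ⟨κ, κ+(r+3), R⟩, b = ⟨κ+1, κ+(r+3), P⟩
      rw [c3] at h1; rw [c3] at h2
      cases v <;>
        simp only [baseD, Diag.mk.injEq, reduceCtorEq, and_false, false_and,
          and_true] at h1
      next kk =>
      obtain ⟨rfl, -⟩ := h1
      cases w <;>
        simp only [baseD, Diag.mk.injEq, reduceCtorEq, and_false, false_and,
          and_true] at h2
      · -- w = center
        obtain ⟨rfl, -⟩ := h2
        exact Or.inr ⟨rfl, Or.inr (Or.inr (Or.inl ⟨kk, by have := kk.is_lt; omega, rfl, rfl⟩))⟩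
      · -- w = legA l
        next l =>
        obtain ⟨rfl, h2⟩ := h2
        rw [shuffle, cancelz (by omega) (by omega)] at h2
        exact absurd h2 (by have := l.is_lt; omega)
    · -- a = ⟨κ+(r+3), κ, B⟩, b = ⟨κ+1, κ+(r+3), P⟩
      rw [c3] at h1; rw [c3] at h2
      cases v <;>
        simp only [baseD, Diag.mk.injEq, reduceCtorEq, and_false, false_and,
          and_true] at h1
      next kk =>
      obtain ⟨-, rfl⟩ := h1
      cases w <;>
        simp only [baseD, Diag.mk.injEq, reduceCtorEq, and_false, false_and,
          and_true] at h2
      · -- w = center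
        obtain ⟨rfl, -⟩ := h2
        exact Or.inr ⟨rfl, Or.inr (Or.inr (Or.inr (Or.inr (Or.inl
          ⟨kk, by have := kk.is_lt; omega, rfl, rfl⟩))))⟩
      · -- w = legA l
        next l =>
        obtain ⟨rfl, h2⟩ := h2
        rw [shuffle, cancelz (by omega) (by omega)] at h2
        exact absurd h2 (by have := l.is_lt; omega)
  · rintro (⟨rfl, ht⟩ | ⟨rfl, ht⟩)
    · rcases ht with ⟨k, l, hkl, rfl, rfl⟩ | ⟨k, h0, rfl, rfl⟩ | ⟨k, h0, rfl, rfl⟩ |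
        ⟨k, l, hkl, -, -⟩ | ⟨k, h0, rfl, rfl⟩ | ⟨k, l, hkl, -, -⟩
      · -- legA k → legA l
        refine Or.inl ?_
        have hk := k.is_lt; have hl := l.is_lt
        have hj : i' + ((r+1-(l:ℕ) : ℕ) : ZMod (r+5)) =
            i' + ((r+1-(k:ℕ) : ℕ) : ZMod (r+5)) + 1 := by
          rw [succ_cast, cancelz (by omega) (by omega)]; omega
        simp only [baseD]
        rw [← hj]
      · -- legA k → center
        refine Or.inl ?_
        have hk := k.is_lt
        have hj : i' + ((r+2 : ℕ) : ZMod (r+5)) =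
            i' + ((r+1-(k:ℕ) : ℕ) : ZMod (r+5)) + 1 := by
          rw [succ_cast, cancelz (by omega) (by omega)]; omega
        simp only [baseD]
        rw [← hj]
      · -- center → legB
        refine Or.inr (Or.inr (Or.inl ⟨i', ?_, Or.inl ?_⟩)) <;>
          simp only [baseD, c2, c3]
      · exact absurd hkl (by have := l.is_lt; omega)
      · -- center → legC
        refine Or.inr (Or.inr (Or.inl ⟨i', ?_, Or.inr ?_⟩)) <;>
          simp only [baseD, c2, c3]
      · exact absurd hkl (by have := l.is_lt; omega)
    · rcases ht with ⟨k, l, hkl, rfl, rfl⟩ | ⟨k, h0, rfl, rfl⟩ | ⟨k, h0, rfl, rfl⟩ |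
        ⟨k, l, hkl, -, -⟩ | ⟨k, h0, rfl, rfl⟩ | ⟨k, l, hkl, -, -⟩
      · -- w = legA k, v = legA l
        refine Or.inr (Or.inl ?_)
        have hk := k.is_lt; have hl := l.is_lt
        have hj : i + 1 + ((r+1-(k:ℕ) : ℕ) : ZMod (r+5)) =
            i + ((r+1-(l:ℕ) : ℕ) : ZMod (r+5)) := by
          rw [shuffle, cancelz (by omega) (by omega)]; omega
        simp only [baseD]
        rw [hj]
      · -- w = legA k, v = center
        refine Or.inr (Or.inl ?_)
        have hk := k.is_lt
        have hj : i + 1 + ((r+1-(k:ℕ) : ℕ) : ZMod (r+5)) =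
            i + ((r+2 : ℕ) : ZMod (r+5)) := by
          rw [shuffle, cancelz (by omega) (by omega)]; omega
        simp only [baseD]
        rw [hj]
      · -- w = center, v = legB
        have hj : i + 1 + ((r+2 : ℕ) : ZMod (r+5)) =
            i + ((r+3 : ℕ) : ZMod (r+5)) := by
          rw [shuffle, cancelz (by omega) (by omega)]
        refine Or.inr (Or.inr (Or.inr ⟨i, Or.inl ?_, ?_⟩)) <;>
          simp only [baseD, c2, c3]
        rw [hj]
      · exact absurd hkl (by have := l.is_lt; omega)
      · -- w = center, v = legC
        have hj : i + 1 + ((r+2 : ℕ) : ZMod (r+5)) =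
            i + ((r+3 : ℕ) : ZMod (r+5)) := by
          rw [shuffle, cancelz (by omega) (by omega)]
        refine Or.inr (Or.inr (Or.inr ⟨i, Or.inr ?_, ?_⟩)) <;>
          simp only [baseD, c2, c3]
        rw [hj]
      · exact absurd hkl (by have := l.is_lt; omega)
end AuxD
section AuxE
variable {r : ℕ}

lemma rho_baseD (i : ZMod (r+5)) (v : TVert r 1 1) :
    rho (baseD r i v) = baseD r i (treeRho v) := by
  cases v <;> rfl

lemma shiftD_baseD (i : ZMod (r+5)) (v : TVert r 1 1) :
    shiftD (baseD r i v) = baseD r (i - 1) v := by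
  cases v <;> simp only [baseD, shiftD, Diag.mk.injEq, and_true, true_and] <;> ring_nf

lemma iter_rho_baseD (j : ℕ) (i : ZMod (r+5)) (v : TVert r 1 1) :
    rho^[j] (baseD r i v) = baseD r i (((treeRhoPerm r 1) ^ (j : ℤ)) v) := by
  induction j generalizing v with
  | zero => simp
  | succ n ih =>
    rw [Function.iterate_succ_apply, rho_baseD, ih]
    have hc : ((n+1 : ℕ) : ℤ) = (n : ℤ) + 1 := by push_cast; ring
    rw [hc, zpow_add, zpow_one, Equiv.Perm.mul_apply]
    rfl

/-- The twisting exponent. -/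
def EE (r : ℕ) (n : ℤ) : ℤ := n + (-n) % (r+5)

lemma em1 : (-1 : ℤ) % ((r:ℤ)+5) = (r:ℤ)+4 := by
  rw [show (-1:ℤ) = ((r:ℤ)+4) + ((r:ℤ)+5)*(-1) by ring, Int.add_mul_emod_self_left]
  exact Int.emod_eq_of_lt (by omega) (by omega)

lemma EE_shift {n n' : ℤ} (h : ((r:ℤ)+5) ∣ n' - n) : EE r n' = EE r n + (n' - n) := by
  obtain ⟨c, hc⟩ := h
  have h1 : (-n') % ((r:ℤ)+5) = (-n) % ((r:ℤ)+5) := by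
    rw [show -n' = -n + ((r:ℤ)+5) * (-c) by linear_combination -hc, Int.add_mul_emod_self_left]
  unfold EE
  omega

lemma EE_seam {n : ℤ} (h : n ≡ 1 [ZMOD (r+5)]) : EE r (n-1) = EE r n - ((r:ℤ)+5) := by
  have hd : ((r:ℤ)+5) ∣ 1 - n := by
    have := Int.ModEq.dvd h
    simpa using this
  have h1 : (-(n-1)) % ((r:ℤ)+5) = 0 := by
    rw [show -(n-1) = 1 - n by ring]
    exact Int.emod_eq_zero_of_dvd hd
  have h2 : (-n) % ((r:ℤ)+5) = (r:ℤ)+4 := by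
    have hm : (-n) % ((r:ℤ)+5) = (-1 : ℤ) % ((r:ℤ)+5) := Int.ModEq.neg h
    rw [hm, em1]
  unfold EE
  omega

lemma EE_nonseam {n : ℤ} (h : ¬ n ≡ 1 [ZMOD (r+5)]) : EE r (n-1) = EE r n := by
  have hpos : (0:ℤ) < (r:ℤ)+5 := by omega
  have ha0 : 0 ≤ (-n) % ((r:ℤ)+5) := Int.emod_nonneg _ (by omega)
  have haM : (-n) % ((r:ℤ)+5) < (r:ℤ)+5 := Int.emod_lt_of_pos _ hpos
  have hne : (-n) % ((r:ℤ)+5) ≠ (r:ℤ)+4 := by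
    intro hc
    apply h
    have hm : (-n) % ((r:ℤ)+5) = (-1 : ℤ) % ((r:ℤ)+5) := by rw [hc, em1]
    have : (-n) ≡ (-1) [ZMOD ((r:ℤ)+5)] := hm
    have h2 := this.neg
    simpa using h2
  have key : (-(n-1)) % ((r:ℤ)+5) = (-n) % ((r:ℤ)+5) + 1 := by
    rw [show -(n-1) = (-n)+1 by ring, Int.add_emod,
      show (1:ℤ) % ((r:ℤ)+5) = 1 from Int.emod_eq_of_lt (by omega) (by omega)]
    exact Int.emod_eq_of_lt (by omega) (by omega)
  unfold EE
  omega

/-- The quotient map. -/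
def phiD (r : ℕ) (x : ℤ × TVert r 1 1) : Diag (r+5) :=
  baseD r (x.1 : ZMod (r+5)) (((treeRhoPerm r 1) ^ (EE r x.1)) x.2)

lemma shiftPerm_zpow_apply {V : Type} (m : ℕ) (σ : Equiv.Perm V) (k : ℤ) (x : ℤ × V) :
    ((shiftPerm m σ) ^ k) x = (x.1 + k * m, (σ ^ k) x.2) := by
  have happ : ∀ z : ℤ × V, shiftPerm m σ z = (z.1 + m, σ z.2) := fun z => rfl
  have hinv : ∀ z : ℤ × V, (shiftPerm m σ)⁻¹ z = (z.1 - m, σ⁻¹ z.2) := by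
    intro z
    rw [Equiv.Perm.inv_def, Equiv.symm_apply_eq, happ]
    simp
  induction k using Int.induction_on generalizing x with
  | zero => simp
  | succ n ih =>
    rw [zpow_add_one, Equiv.Perm.mul_apply, happ, ih]
    refine Prod.ext ?_ ?_
    · push_cast; ring
    · rw [zpow_add_one, Equiv.Perm.mul_apply]
  | pred n ih =>
    rw [zpow_sub_one, Equiv.Perm.mul_apply, hinv, ih]
    refine Prod.ext ?_ ?_
    · push_cast; ring
    · rw [zpow_sub_one, Equiv.Perm.mul_apply]
end AuxE
section AuxF
variable {r : ℕ}

lemma tarrow_zpow_right {b : ℤ} {v w : TVert r 1 1} :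
    TArrow v (((treeRhoPerm r 1) ^ b) w) ↔ TArrow v w := by
  have := @tarrow_zpow r 0 b v w
  simpa using this

lemma comp_zpow (a b : ℤ) (v : TVert r 1 1) :
    ((treeRhoPerm r 1) ^ a) (((treeRhoPerm r 1) ^ b) v)
      = ((treeRhoPerm r 1) ^ (a + b)) v := by
  rw [← Equiv.Perm.mul_apply, ← zpow_add]

lemma zmodI {a b : ℤ} : ((a : ZMod (r+5)) = (b : ZMod (r+5))) ↔ ((r:ℤ)+5) ∣ b - a := by
  rw [ZMod.intCast_eq_intCast_iff, Int.modEq_iff_dvd]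
  push_cast
  rfl

lemma g_apply (k : ℤ) (x : ℤ × TVert r 1 1) :
    ((shiftPerm (r+5) ((treeRhoPerm r 1) ^ (r+5))) ^ k) x
      = (x.1 + k * ((r:ℤ)+5), ((treeRhoPerm r 1) ^ (k * ((r:ℤ)+5))) x.2) := by
  rw [shiftPerm_zpow_apply]
  refine Prod.ext ?_ ?_
  · push_cast; ring_nf
  · show (((treeRhoPerm r 1) ^ ((r:ℕ)+5)) ^ k) x.2 = _
    rw [← zpow_natCast, ← zpow_mul]
    congr 1
    push_cast; ring_nf

lemma seam_source {a : Diag (r+5)}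
    (h : a ∈ (tauD r 1 1) '' (PiSetAt r 1 1 (1 : ZMod (r+5)))) :
    ∃ u, a = baseD r 0 u := by
  obtain ⟨d, hd, rfl⟩ := h
  obtain ⟨w, rfl⟩ := mem_sliceAt_iff.mp hd
  rw [tauD, if_pos ⟨rfl, hd⟩, shiftD_baseD, iter_rho_baseD]
  exact ⟨_, by rw [sub_self]⟩

lemma arrowD_iff_rot (x y : ℤ × TVert r 1 1) :
    ArrowD r 1 1 (r+5) (phiD r x) (phiD r y) ↔ Rot r (phiD r x) (phiD r y) := by
  constructor
  · rintro ⟨-, -, b₀, hrot, ⟨hst, hb⟩ | ⟨-, hb⟩⟩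
    · obtain ⟨-, -, hsrc, hb0⟩ := hst
      obtain ⟨u, hxu⟩ := seam_source hsrc
      obtain ⟨w, rfl⟩ := mem_sliceAt_iff.mp hb0
      rw [hxu, rot_base_iff] at hrot
      rcases hrot with ⟨h10, -⟩ | ⟨-, hT⟩
      · exact absurd h10 zmodOneNeZero
      · rw [hb, hxu, rho_baseD, tarrow_src hT, rot_base_iff]
        exact Or.inr ⟨(zero_add 1).symm, hT⟩
    · rw [hb]; exact hrot
  · intro hrot
    refine ⟨baseD_mem_PiSet _ _, baseD_mem_PiSet _ _, phiD r y, hrot, ?_⟩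
    by_cases hst : SeamTwist r 1 1 (r+5) (phiD r x) (phiD r y)
    · refine Or.inl ⟨hst, ?_⟩
      obtain ⟨-, -, hsrc, hb0⟩ := hst
      obtain ⟨u, hxu⟩ := seam_source hsrc
      obtain ⟨w, hyw⟩ := mem_sliceAt_iff.mp hb0
      rw [hxu, hyw, rot_base_iff] at hrot
      rcases hrot with ⟨h10, -⟩ | ⟨-, hT⟩
      · exact absurd h10 zmodOneNeZero
      · rw [hyw, rho_baseD, tarrow_src hT]
    · exact Or.inr ⟨hst, rfl⟩
end AuxF
section AuxG
variable {r : ℕ}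
lemma tarrow_zpow_left {a : ℤ} {v w : TVert r 1 1} :
    TArrow (((treeRhoPerm r 1) ^ a) v) w ↔ TArrow v w := by
  have := @tarrow_zpow r a 0 v w
  simpa using this
end AuxG

/-- Corollary 4.3, type `D`. For every nonnegative integer
`r`, the quiver `Γ^{r+5}_{r,1,1}` of coloured oriented single and paired
diagonals of a regular `(r+5)`-gon is isomorphic, as a stable translation
quiver, to `ℤ D_{r+3} / ⟨τ^{-(r+5)} ρ^{r+5}⟩`, where `D_{r+3} = T_{r,1,1}`
and `ρ` is the automorphism of `ℤ D_{r+3}` induced by the order-two diagram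
automorphism of `D_{r+3}`.  (This quotient is the AR-quiver of the orbit
category `D^b(mod k D_{r+3})/τ^{-3}Σ`.) -/
theorem gamma_iso_ZD_quotient (r : ℕ) :
    ∃ φ : ℤ × TVert r 1 1 → Diag (r + 5),
      IsQuotientIso r 1 1 (r + 5) TArrow
        (shiftPerm (r + 5) ((treeRhoPerm r 1) ^ (r + 5))) φ := by
  haveI : NeZero (r+5) := ⟨by omega⟩
  refine ⟨phiD r, ?_, ?_, ?_, ?_, ?_⟩
  · -- image in PiSet
    intro x
    exact baseD_mem_PiSet _ _
  · -- surjectivity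
    rintro d hd
    rw [PiSet, Set.mem_iUnion] at hd
    obtain ⟨i, hi⟩ := hd
    obtain ⟨v, rfl⟩ := mem_sliceAt_iff.mp hi
    refine ⟨((i.val : ℤ), ((treeRhoPerm r 1) ^ (EE r (i.val : ℤ)))⁻¹ v), ?_⟩
    simp only [phiD]
    rw [show ∀ (f : Equiv.Perm (TVert r 1 1)) x, f (f⁻¹ x) = x from fun f x => f.apply_symm_apply x]
    congr 1
    rw [Int.cast_natCast]
    exact ZMod.natCast_rightInverse i
  · -- fibres are orbits
    rintro ⟨n, v⟩ ⟨n', v'⟩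
    simp only [phiD]
    constructor
    · intro h
      obtain ⟨hc, hv⟩ := baseD_inj h
      have hdvd : ((r:ℤ)+5) ∣ n' - n := zmodI.mp hc
      have hk : ((n' - n) / ((r:ℤ)+5)) * ((r:ℤ)+5) = n' - n := Int.ediv_mul_cancel hdvd
      set k : ℤ := (n' - n) / ((r:ℤ)+5) with hkdef
      have hEE : EE r n' = EE r n + (n' - n) := EE_shift hdvd
      refine ⟨k, ?_⟩
      rw [g_apply]
      refine Prod.ext ?_ ?_
      · show n + k * ((r:ℤ)+5) = n'
        linear_combination hk
      · show ((treeRhoPerm r 1) ^ (k * ((r:ℤ)+5))) v = v'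
        have h2 := congrArg ⇑(((treeRhoPerm r 1) ^ (EE r n'))⁻¹) hv
        rw [show ∀ (f : Equiv.Perm (TVert r 1 1)) x, f⁻¹ (f x) = x from fun f x => f.symm_apply_apply x, ← zpow_neg, comp_zpow] at h2
        rw [← h2]
        rw [rpow_parity (show (2:ℤ) ∣ k * ((r:ℤ)+5) - (-EE r n' + EE r n) from
          ⟨k * ((r:ℤ)+5), by linear_combination hEE - hk⟩)]
    · rintro ⟨k, hk⟩
      rw [g_apply] at hk
      injection hk with h1 h2
      subst h1
      subst h2
      have hdvd : ((r:ℤ)+5) ∣ (n + k * ((r:ℤ)+5)) - n := ⟨k, by ring⟩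
      have hEE := EE_shift hdvd
      have hcast : ((n : ℤ) : ZMod (r+5)) = (((n + k * ((r:ℤ)+5)) : ℤ) : ZMod (r+5)) :=
        zmodI.mpr ⟨k, by ring⟩
      rw [← hcast, comp_zpow]
      congr 1
      rw [rpow_parity (show (2:ℤ) ∣ EE r n - (EE r (n + k * ((r:ℤ)+5)) + k * ((r:ℤ)+5)) from
        ⟨-(k * ((r:ℤ)+5)), by linear_combination -hEE⟩)]
  · -- translation
    rintro ⟨n, v⟩
    show phiD r (n - 1, v) = tauD r 1 1 (phiD r (n, v))
    by_cases hn : ((n : ℤ) : ZMod (r+5)) = (((1:ℤ)) : ZMod (r+5))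
    · have hmod : n ≡ 1 [ZMOD ((r:ℤ)+5)] := by
        have := (ZMod.intCast_eq_intCast_iff _ _ _).mp hn
        exact_mod_cast this
      have hn1 : ((n : ℤ) : ZMod (r+5)) = 1 := by rw [hn]; simp
      have hx : phiD r (n, v) = baseD r 1 (((treeRhoPerm r 1) ^ (EE r n)) v) := by
        simp only [phiD]
        rw [hn1]
      rw [hx]
      simp only [tauD]
      rw [if_pos ⟨rfl, mem_sliceAt_iff.mpr ⟨_, rfl⟩⟩, shiftD_baseD, iter_rho_baseD]
      simp only [phiD]
      have hEs : EE r (n-1) = EE r n - ((r:ℤ)+5) := EE_seam hmod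
      congr 1
      · push_cast
        rw [hn1]
      · rw [comp_zpow]
        rw [rpow_parity (show (2:ℤ) ∣ EE r (n-1) - (((r+5 : ℕ) : ℤ) + EE r n) from
          ⟨-((r:ℤ)+5), by push_cast; linear_combination hEs⟩)]
    · have hmod : ¬ n ≡ 1 [ZMOD ((r:ℤ)+5)] := by
        intro hc
        apply hn
        rw [ZMod.intCast_eq_intCast_iff]
        exact_mod_cast hc
      simp only [tauD]
      rw [if_neg]
      · simp only [phiD]
        rw [shiftD_baseD, EE_nonseam hmod]
        congr 1
        push_cast
        ring
      · rintro ⟨-, hmem⟩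
        obtain ⟨w, hw⟩ := mem_sliceAt_iff.mp hmem
        have h1 := (baseD_inj hw).1
        apply hn
        rw [h1]
        simp
  · -- arrows
    rintro ⟨n, v⟩ ⟨n', v'⟩
    rw [arrowD_iff_rot]
    simp only [phiD]
    rw [rot_base_iff]
    constructor
    · rintro (⟨hc, hT⟩ | ⟨hc, hT⟩)
      · have hdvd : ((r:ℤ)+5) ∣ n - n' := zmodI.mp hc
        have hk : ((n - n') / ((r:ℤ)+5)) * ((r:ℤ)+5) = n - n' := Int.ediv_mul_cancel hdvd
        set k : ℤ := (n - n') / ((r:ℤ)+5) with hkdef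
        refine ⟨_, ⟨k, rfl⟩, ?_⟩
        rw [g_apply]
        left
        refine ⟨?_, ?_⟩
        · show n' + k * ((r:ℤ)+5) = n
          linear_combination hk
        · show TArrow v (((treeRhoPerm r 1) ^ (k * ((r:ℤ)+5))) v')
          rw [tarrow_zpow_right]
          exact tarrow_zpow.mp hT
      · have hc' : ((n' : ℤ) : ZMod (r+5)) = (((n+1 : ℤ)) : ZMod (r+5)) := by
          push_cast
          exact hc
        have hdvd : ((r:ℤ)+5) ∣ (n+1) - n' := zmodI.mp hc'
        have hk : (((n+1) - n') / ((r:ℤ)+5)) * ((r:ℤ)+5) = (n+1) - n' :=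
          Int.ediv_mul_cancel hdvd
        set k : ℤ := ((n+1) - n') / ((r:ℤ)+5) with hkdef
        refine ⟨_, ⟨k, rfl⟩, ?_⟩
        rw [g_apply]
        right
        refine ⟨?_, ?_⟩
        · show n' + k * ((r:ℤ)+5) = n + 1
          linear_combination hk
        · show TArrow (((treeRhoPerm r 1) ^ (k * ((r:ℤ)+5))) v') v
          rw [tarrow_zpow_left]
          exact tarrow_zpow.mp hT
    · rintro ⟨y', ⟨k, rfl⟩, hz⟩
      rw [g_apply] at hz
      rcases hz with ⟨h1, hT⟩ | ⟨h1, hT⟩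
      · left
        refine ⟨zmodI.mpr ⟨k, by linear_combination -h1⟩, ?_⟩
        exact tarrow_zpow.mpr (tarrow_zpow_right.mp hT)
      · right
        refine ⟨?_, tarrow_zpow.mpr (tarrow_zpow_left.mp hT)⟩
        have hcc : ((n' : ℤ) : ZMod (r+5)) = (((n+1:ℤ)) : ZMod (r+5)) :=
          zmodI.mpr ⟨k, by linear_combination -h1⟩
        rw [hcc]
        push_cast
        ring
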